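/- Let G and H be locally compact, second-countable, Hausdorff abelian topological groups with Haar measures, and equip G × H with the product Haar measure. If f ∈ K₂(G) and g ∈ K₂(H), then the tensor product f ⊙ g : G × H → ℂ, (f ⊙ g)(x, y) := f(x)·g(y), belongs to K₂(G × H). -/

import Mathlib

open MeasureTheory

/-- `K₂(G)`: the ℂ-linear span of convolutions `φ ⋆ ψ` of pairs of continuous,
compactly supported complex-valued functions on `G`, convolution taken w.r.t. `μ`. -/
noncomputable def K2 {G : Type*} [AddCommGroup G] [TopologicalSpace G] [MeasurableSpace G]
    (μ : Measure G) : Submodule ℂ (G → ℂ) :=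
  Submodule.span ℂ {h : G → ℂ | ∃ φ ψ : G → ℂ,
    Continuous φ ∧ HasCompactSupport φ ∧ Continuous ψ ∧ HasCompactSupport ψ ∧
    h = MeasureTheory.convolution φ ψ (ContinuousLinearMap.mul ℂ ℂ) μ}

lemma hcs_tensor {G H : Type*} [TopologicalSpace G] [TopologicalSpace H]
    [T2Space G] [T2Space H]
    {φ : G → ℂ} {φ' : H → ℂ} (h : HasCompactSupport φ) (h' : HasCompactSupport φ') :
    HasCompactSupport (fun p : G × H => φ p.1 * φ' p.2) := by
  apply HasCompactSupport.intro (h.prod h')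
  intro p hp
  simp only [Set.mem_prod, not_and_or] at hp
  rcases hp with hp | hp
  · rw [image_eq_zero_of_notMem_tsupport hp, zero_mul]
  · rw [image_eq_zero_of_notMem_tsupport hp, mul_zero]

lemma conv_tensor {G H : Type*}
    [AddCommGroup G] [TopologicalSpace G] [IsTopologicalAddGroup G]
    [LocallyCompactSpace G] [SecondCountableTopology G] [T2Space G]
    [MeasurableSpace G] [BorelSpace G]
    [AddCommGroup H] [TopologicalSpace H] [IsTopologicalAddGroup H]
    [LocallyCompactSpace H] [SecondCountableTopology H] [T2Space H]
    [MeasurableSpace H] [BorelSpace H]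
    (μ : Measure G) [μ.IsAddHaarMeasure]
    (ν : Measure H) [ν.IsAddHaarMeasure]
    (φ ψ : G → ℂ) (φ' ψ' : H → ℂ) :
    (fun p : G × H =>
        MeasureTheory.convolution φ ψ (ContinuousLinearMap.mul ℂ ℂ) μ p.1 *
        MeasureTheory.convolution φ' ψ' (ContinuousLinearMap.mul ℂ ℂ) ν p.2) =
      MeasureTheory.convolution (fun p : G × H => φ p.1 * φ' p.2)
        (fun p : G × H => ψ p.1 * ψ' p.2) (ContinuousLinearMap.mul ℂ ℂ) (μ.prod ν) := by
  funext p
  simp only [MeasureTheory.convolution, ContinuousLinearMap.mul_apply']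
  rw [← integral_prod_mul (μ := μ) (ν := ν)
    (f := fun t => φ t * ψ (p.1 - t)) (g := fun s => φ' s * ψ' (p.2 - s))]
  congr 1
  funext q
  show (φ q.1 * ψ (p.1 - q.1)) * (φ' q.2 * ψ' (p.2 - q.2))
      = (φ q.1 * φ' q.2) * (ψ (p.1 - q.1) * ψ' (p.2 - q.2))
  ring

lemma tensor_mem_right {G H : Type*}
    [AddCommGroup G] [TopologicalSpace G] [MeasurableSpace G]
    [AddCommGroup H] [TopologicalSpace H] [MeasurableSpace H]
    (π : Measure (G × H)) (ν : Measure H)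
    (f : G → ℂ) (g : H → ℂ) (hg : g ∈ K2 ν)
    (hbase : ∀ g₀ : H → ℂ, (∃ φ ψ : H → ℂ,
      Continuous φ ∧ HasCompactSupport φ ∧ Continuous ψ ∧ HasCompactSupport ψ ∧
      g₀ = MeasureTheory.convolution φ ψ (ContinuousLinearMap.mul ℂ ℂ) ν) →
      (fun p : G × H => f p.1 * g₀ p.2) ∈ K2 π) :
    (fun p : G × H => f p.1 * g p.2) ∈ K2 π := by
  induction hg using Submodule.span_induction with
  | mem g hgmem => exact hbase g hgmem
  | zero =>
    have : (fun p : G × H => f p.1 * (0 : H → ℂ) p.2) = 0 := by funext p; simp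
    rw [this]; exact Submodule.zero_mem _
  | add g₁ g₂ _ _ h1 h2 =>
    have : (fun p : G × H => f p.1 * (g₁ + g₂) p.2) =
        (fun p : G × H => f p.1 * g₁ p.2) + (fun p : G × H => f p.1 * g₂ p.2) := by
      funext p; simp [mul_add]
    rw [this]; exact Submodule.add_mem _ h1 h2
  | smul c g₁ _ h1 =>
    have : (fun p : G × H => f p.1 * (c • g₁) p.2) =
        c • (fun p : G × H => f p.1 * g₁ p.2) := by
      funext p; simp; ring
    rw [this]; exact Submodule.smul_mem _ c h1

theorem tensor_mem_K2 {G H : Type*}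
    [AddCommGroup G] [TopologicalSpace G] [IsTopologicalAddGroup G]
    [LocallyCompactSpace G] [SecondCountableTopology G] [T2Space G]
    [MeasurableSpace G] [BorelSpace G]
    [AddCommGroup H] [TopologicalSpace H] [IsTopologicalAddGroup H]
    [LocallyCompactSpace H] [SecondCountableTopology H] [T2Space H]
    [MeasurableSpace H] [BorelSpace H]
    (μ : Measure G) [μ.IsAddHaarMeasure]
    (ν : Measure H) [ν.IsAddHaarMeasure]
    (f : G → ℂ) (g : H → ℂ) (hf : f ∈ K2 μ) (hg : g ∈ K2 ν) :
    (fun p : G × H => f p.1 * g p.2) ∈ K2 (μ.prod ν) := by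
  induction hf using Submodule.span_induction with
  | mem f hfmem =>
    obtain ⟨φ, ψ, hφc, hφs, hψc, hψs, rfl⟩ := hfmem
    refine tensor_mem_right _ ν _ g hg ?_
    rintro g₀ ⟨φ', ψ', hφ'c, hφ's, hψ'c, hψ's, rfl⟩
    apply Submodule.subset_span
    refine ⟨fun p : G × H => φ p.1 * φ' p.2, fun p : G × H => ψ p.1 * ψ' p.2,
      (hφc.comp continuous_fst).mul (hφ'c.comp continuous_snd),
      hcs_tensor hφs hφ's,
      (hψc.comp continuous_fst).mul (hψ'c.comp continuous_snd),
      hcs_tensor hψs hψ's, ?_⟩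
    exact conv_tensor μ ν φ ψ φ' ψ'
  | zero =>
    have : (fun p : G × H => (0 : G → ℂ) p.1 * g p.2) = 0 := by funext p; simp
    rw [this]; exact Submodule.zero_mem _
  | add f₁ f₂ _ _ h1 h2 =>
    have : (fun p : G × H => (f₁ + f₂) p.1 * g p.2) =
        (fun p : G × H => f₁ p.1 * g p.2) + (fun p : G × H => f₂ p.1 * g p.2) := by
      funext p; simp [add_mul]
    rw [this]; exact Submodule.add_mem _ h1 h2
  | smul c f₁ _ h1 =>
    have : (fun p : G × H => (c • f₁) p.1 * g p.2) =
        c • (fun p : G × H => f₁ p.1 * g p.2) := by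
      funext p; simp [mul_assoc]
    rw [this]; exact Submodule.smul_mem _ c h1
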